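/- Let N ≥ 0, β ≥ 1 and k be integers with 0 ≤ k ≤ β−1, and define the polynomial J(s) = Σ_{j=0}^{N} (−1)^j · binom(N,j) · ((N+β+1)_j / j!) · (1−s)^j, where (q)_j denotes the Pochhammer symbol (rising factorial). Then ∫_0^1 s^{β−k−1} · J(s) ds = (−1)^N · (N+k)! · (β−k−1)! / (k! · (N+β−k)!). -/

import Mathlib

/-- Beta-type moment: `∫_0^1 s^m (1-s)^j ds = m! j! / (m+j+1)!`. -/
lemma beta_moment (j : ℕ) : ∀ m : ℕ, (∫ s in (0:ℝ)..1, s ^ m * (1 - s) ^ j)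
    = (m.factorial * j.factorial : ℝ) / (m + j + 1).factorial := by
  induction j with
  | zero =>
    intro m
    have h0 : (∫ s in (0:ℝ)..1, s ^ m * (1 - s) ^ 0) = ∫ s in (0:ℝ)..1, s ^ m := by
      simp
    rw [h0, integral_pow, one_pow, zero_pow (by omega : m + 1 ≠ 0), sub_zero,
      show m + 0 + 1 = m + 1 from rfl, Nat.factorial_succ, Nat.factorial_zero]
    have hm : (m.factorial : ℝ) ≠ 0 := Nat.cast_ne_zero.2 (Nat.factorial_ne_zero m)
    have hm1 : ((m : ℝ) + 1) ≠ 0 := by positivity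
    push_cast
    field_simp
  | succ j ih =>
    intro m
    have key : ∀ s : ℝ, s ^ m * (1 - s) ^ (j + 1)
        = s ^ m * (1 - s) ^ j - s ^ (m + 1) * (1 - s) ^ j := by
      intro s; ring
    have hint : ∀ p q : ℕ, IntervalIntegrable (fun s : ℝ => s ^ p * (1 - s) ^ q)
        MeasureTheory.volume 0 1 := fun p q =>
      (by continuity : Continuous fun s : ℝ => s ^ p * (1 - s) ^ q).intervalIntegrable 0 1
    rw [intervalIntegral.integral_congr (fun s _ => key s),
      intervalIntegral.integral_sub (hint m j) (hint (m + 1) j), ih m, ih (m + 1)]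
    have e1 : ((m + j + 2).factorial : ℝ) = (m + j + 2) * (m + j + 1).factorial := by
      rw [show m + j + 2 = (m + j + 1) + 1 by ring, Nat.factorial_succ]; push_cast; ring
    have e2 : ((m + 1).factorial : ℝ) = (m + 1) * m.factorial := by
      rw [Nat.factorial_succ]; push_cast; ring
    have e3 : ((j + 1).factorial : ℝ) = (j + 1) * j.factorial := by
      rw [Nat.factorial_succ]; push_cast; ring
    rw [show m + 1 + j + 1 = m + j + 2 by ring, show m + (j + 1) + 1 = m + j + 2 by ring,
      e1, e2, e3]
    have h1 : ((m + j + 1).factorial : ℝ) ≠ 0 := Nat.cast_ne_zero.2 (Nat.factorial_ne_zero _)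
    have h2 : ((m : ℝ) + j + 2) ≠ 0 := by positivity
    field_simp
    ring

/-- Alternating binomial sum: `Σ_j (-1)^j C(N,j) C(x+j, N+k) = (-1)^N C(x,k)`. -/
lemma alt_choose_sum (N : ℕ) : ∀ x k : ℕ,
    (∑ j ∈ Finset.range (N + 1),
      (-1 : ℝ) ^ j * (N.choose j) * ((x + j).choose (N + k)))
      = (-1 : ℝ) ^ N * (x.choose k) := by
  induction N with
  | zero => intro x k; simp
  | succ N ih =>
    intro x k
    have split : ∀ j ∈ Finset.range (N + 2),
        (-1 : ℝ) ^ j * ((N + 1).choose j) * ((x + j).choose (N + 1 + k))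
        = (-1 : ℝ) ^ j * (N.choose j) * ((x + j).choose (N + (k + 1)))
          + ((-1 : ℝ) ^ j * ((N + 1).choose j) * ((x + j).choose (N + 1 + k))
            - (-1 : ℝ) ^ j * (N.choose j) * ((x + j).choose (N + (k + 1)))) := by
      intro j _; ring
    rw [Finset.sum_congr rfl split, Finset.sum_add_distrib]
    have hA : (∑ j ∈ Finset.range (N + 2),
        (-1 : ℝ) ^ j * (N.choose j) * ((x + j).choose (N + (k + 1))))
        = (-1 : ℝ) ^ N * (x.choose (k + 1)) := by
      rw [Finset.sum_range_succ, Nat.choose_succ_self, ih x (k + 1)]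
      simp
    have hB : (∑ j ∈ Finset.range (N + 2),
        ((-1 : ℝ) ^ j * ((N + 1).choose j) * ((x + j).choose (N + 1 + k))
          - (-1 : ℝ) ^ j * (N.choose j) * ((x + j).choose (N + (k + 1)))))
        = -((-1 : ℝ) ^ N * ((x + 1).choose (k + 1))) := by
      rw [Finset.sum_range_succ']
      have h0 : ((-1 : ℝ) ^ 0 * ((N + 1).choose 0) * ((x + 0).choose (N + 1 + k))
          - (-1 : ℝ) ^ 0 * (N.choose 0) * ((x + 0).choose (N + (k + 1)))) = 0 := by
        simp [show N + 1 + k = N + (k + 1) by ring]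
      rw [h0, add_zero]
      have term : ∀ i ∈ Finset.range (N + 1),
          ((-1 : ℝ) ^ (i + 1) * ((N + 1).choose (i + 1)) * ((x + (i + 1)).choose (N + 1 + k))
            - (-1 : ℝ) ^ (i + 1) * (N.choose (i + 1)) * ((x + (i + 1)).choose (N + (k + 1))))
          = -((-1 : ℝ) ^ i * (N.choose i) * (((x + 1) + i).choose (N + (k + 1)))) := by
        intro i _
        rw [Nat.choose_succ_succ N i]
        have hx : x + (i + 1) = (x + 1) + i := by ring
        have hnk : N + 1 + k = N + (k + 1) := by ring
        rw [hx, hnk]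
        push_cast
        ring
      rw [Finset.sum_congr rfl term, Finset.sum_neg_distrib, ih (x + 1) (k + 1)]
    rw [hA, hB]
    have hp : ((x + 1).choose (k + 1) : ℝ) = (x.choose k : ℝ) + (x.choose (k + 1) : ℝ) := by
      rw [Nat.choose_succ_succ]; push_cast; ring
    rw [hp]
    ring

/-- The polynomial `J(s) = Σ_{j=0}^{N} (−1)^j·C(N,j)·((N+β+1)_j/j!)·(1−s)^j`,
i.e. the Jacobi polynomial `P_N^{(0,β)}(2s−1)`. -/
noncomputable def Jpoly (N β : ℕ) (s : ℝ) : ℝ :=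
  ∑ j ∈ Finset.range (N + 1),
    (-1 : ℝ) ^ j * (N.choose j) *
      ((ascPochhammer ℝ j).eval ((N : ℝ) + β + 1) / j.factorial) * (1 - s) ^ j

/-- Jacobi-polynomial moment identity (eq. (B) of Appendix B):
`∫_0^1 s^{β−k−1}·J(s) ds = (−1)^N·(N+k)!·(β−k−1)!/(k!·(N+β−k)!)`. -/
theorem jacobi_moment (N β k : ℕ) (hβ : 1 ≤ β) (hk : k ≤ β - 1) :
    ∫ s in (0 : ℝ)..1, s ^ (β - k - 1) * Jpoly N β s =
      (-1 : ℝ) ^ N * (N + k).factorial * (β - k - 1).factorial /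
        (k.factorial * (N + β - k).factorial) := by
  obtain ⟨m, rfl⟩ : ∃ m, β = k + 1 + m := ⟨β - k - 1, by omega⟩
  have hm1 : k + 1 + m - k - 1 = m := by omega
  have hm2 : N + (k + 1 + m) - k = N + m + 1 := by omega
  rw [hm1, hm2]
  set x := N + k + m + 1 with hx
  -- evaluate the Pochhammer symbol
  have hasc : ∀ j : ℕ, (ascPochhammer ℝ j).eval ((N : ℝ) + (k + 1 + m : ℕ) + 1)
      = ((x + 1).ascFactorial j : ℝ) := by
    intro j
    have harg : ((N : ℝ) + (k + 1 + m : ℕ) + 1) = ((x + 1 : ℕ) : ℝ) := by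
      rw [hx]; push_cast; ring
    rw [harg, ← ascPochhammer_eval_cast, ascPochhammer_nat_eq_ascFactorial]
  -- swap the integral and the finite sum
  have hcongr : ∀ s ∈ Set.uIcc (0:ℝ) 1, s ^ m * Jpoly N (k + 1 + m) s
      = ∑ j ∈ Finset.range (N + 1),
        ((-1 : ℝ) ^ j * (N.choose j) * (((x + 1).ascFactorial j : ℝ) / j.factorial))
          * (s ^ m * (1 - s) ^ j) := by
    intro s _
    rw [Jpoly, Finset.mul_sum]
    refine Finset.sum_congr rfl fun j _ => ?_
    rw [hasc j]
    ring
  rw [intervalIntegral.integral_congr hcongr, intervalIntegral.integral_finset_sum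
    (fun j _ => ((by continuity : Continuous fun s : ℝ =>
      ((-1 : ℝ) ^ j * (N.choose j) * (((x + 1).ascFactorial j : ℝ) / j.factorial))
        * (s ^ m * (1 - s) ^ j)).intervalIntegrable 0 1))]
  simp only [intervalIntegral.integral_const_mul, beta_moment]
  -- rewrite each term in binomial form
  have hterm : ∀ j ∈ Finset.range (N + 1),
      ((-1 : ℝ) ^ j * (N.choose j) * (((x + 1).ascFactorial j : ℝ) / j.factorial))
        * ((m.factorial * j.factorial : ℝ) / (m + j + 1).factorial)
      = ((m.factorial : ℝ) * (N + k).factorial / x.factorial)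
          * ((-1 : ℝ) ^ j * (N.choose j) * ((x + j).choose (N + k))) := by
    intro j _
    have hnat : (N + k).factorial * ((x + j).choose (N + k)) * (m + j + 1).factorial
        = x.factorial * ((x + 1).ascFactorial j) := by
      rw [Nat.factorial_mul_ascFactorial]
      have hle : N + k ≤ x + j := by omega
      have hsub : x + j - (N + k) = m + j + 1 := by omega
      calc (N + k).factorial * ((x + j).choose (N + k)) * (m + j + 1).factorial
          = (x + j).choose (N + k) * (N + k).factorial * (x + j - (N + k)).factorial := by
            rw [hsub]; ring
        _ = (x + j).factorial := Nat.choose_mul_factorial_mul_factorial hle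
    have hnatR : ((N + k).factorial : ℝ) * ((x + j).choose (N + k)) * (m + j + 1).factorial
        = (x.factorial : ℝ) * ((x + 1).ascFactorial j) := by
      exact_mod_cast congrArg (Nat.cast (R := ℝ)) hnat
    have h1 : ((m + j + 1).factorial : ℝ) ≠ 0 := Nat.cast_ne_zero.2 (Nat.factorial_ne_zero _)
    have h2 : (j.factorial : ℝ) ≠ 0 := Nat.cast_ne_zero.2 (Nat.factorial_ne_zero _)
    have h3 : (x.factorial : ℝ) ≠ 0 := Nat.cast_ne_zero.2 (Nat.factorial_ne_zero _)
    field_simp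
    linear_combination (-((N.choose j : ℝ))) * hnatR
  rw [Finset.sum_congr rfl hterm, ← Finset.mul_sum, alt_choose_sum N x k]
  -- final arithmetic
  have hch : (x.choose k) * k.factorial * (N + m + 1).factorial = x.factorial := by
    have hle : k ≤ x := by omega
    have hsub : x - k = N + m + 1 := by omega
    rw [← hsub]; exact Nat.choose_mul_factorial_mul_factorial hle
  have hchR : ((x.choose k : ℝ)) * k.factorial * (N + m + 1).factorial = (x.factorial : ℝ) := by
    exact_mod_cast congrArg (Nat.cast (R := ℝ)) hch
  have h3 : (x.factorial : ℝ) ≠ 0 := Nat.cast_ne_zero.2 (Nat.factorial_ne_zero _)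
  have h4 : (k.factorial : ℝ) ≠ 0 := Nat.cast_ne_zero.2 (Nat.factorial_ne_zero _)
  have h5 : ((N + m + 1).factorial : ℝ) ≠ 0 := Nat.cast_ne_zero.2 (Nat.factorial_ne_zero _)
  field_simp
  linear_combination hchR
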